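/- Define Z := Tr exp(log σ_{AB} − log(σ_A⊗I_B) + log(ρ_A⊗I_B)) and τ_{AB} := exp(log σ_{AB} − log(σ_A⊗I_B) + log(ρ_A⊗I_B))/Z, for states ρ_{AB}, σ_{AB} with supp(ρ_{AB}) ⊆ supp(σ_{AB}). If Z ≤ 1, then D(ρ_{AB}‖τ_{AB}) ≤ D(ρ_{AB}‖σ_{AB}) − D(ρ_A‖σ_A), where D is quantum relative entropy and ρ_A, σ_A are the reduced states on A. -/

import Mathlib

open Matrix
open scoped Kronecker ComplexOrder

noncomputable section

def mfun {n : Type*} [Fintype n] [DecidableEq n] (f : ℝ → ℝ) (A : Matrix n n ℂ) : Matrix n n ℂ :=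
  if h : A.IsHermitian then
    h.eigenvectorUnitary.1 * Matrix.diagonal (fun i => (f (h.eigenvalues i) : ℂ)) *
      (star h.eigenvectorUnitary.1)
  else 0

def psqrt {n : Type*} [Fintype n] [DecidableEq n] (A : Matrix n n ℂ) : Matrix n n ℂ :=
  mfun Real.sqrt A

def mlog {n : Type*} [Fintype n] [DecidableEq n] (A : Matrix n n ℂ) : Matrix n n ℂ :=
  mfun Real.log A

def traceNorm {n : Type*} [Fintype n] [DecidableEq n] (A : Matrix n n ℂ) : ℝ :=
  ((psqrt (Aᴴ * A)).trace).re

def fid {n : Type*} [Fintype n] [DecidableEq n] (ρ σ : Matrix n n ℂ) : ℝ :=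
  traceNorm (psqrt ρ * psqrt σ)

def vNEntropy {n : Type*} [Fintype n] [DecidableEq n] (A : Matrix n n ℂ) : ℝ :=
  - ((A * mlog A).trace).re

def relEnt {n : Type*} [Fintype n] [DecidableEq n] (ρ σ : Matrix n n ℂ) : ℝ :=
  ((ρ * mlog ρ).trace - (ρ * mlog σ).trace).re


/-- matrix exponential taken on the support: `exp` of the nonzero eigenvalues,
`0` on the kernel (matching the convention "exponentials are taken on the supports"). -/
def mexp0 {n : Type*} [Fintype n] [DecidableEq n] (A : Matrix n n ℂ) : Matrix n n ℂ :=
  mfun (fun x => if x = 0 then 0 else Real.exp x) A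

def margA13 {A B : Type*} [Fintype A] [Fintype B]
    (ρ : Matrix (A × B) (A × B) ℂ) : Matrix A A ℂ :=
  fun x y => ∑ b : B, ρ (x, b) (y, b)

section Aux
open Polynomial

lemma conj_pow_unitary {n : Type*} [Fintype n] [DecidableEq n]
    (U : Matrix n n ℂ) (hU : U ∈ Matrix.unitaryGroup n ℂ) (D : Matrix n n ℂ) (k : ℕ) :
    (U * D * star U) ^ k = U * D ^ k * star U := by
  induction k with
  | zero => simpa using (Matrix.mem_unitaryGroup_iff.mp hU).symm
  | succ k ih =>
      rw [pow_succ, ih, pow_succ]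
      have h1 : star U * U = 1 := Matrix.mem_unitaryGroup_iff'.mp hU
      calc U * D ^ k * star U * (U * D * star U)
          = U * D ^ k * (star U * U) * D * star U := by noncomm_ring
        _ = U * (D ^ k * D) * star U := by rw [h1]; noncomm_ring

lemma aeval_conj_unitary {n : Type*} [Fintype n] [DecidableEq n]
    (U : Matrix n n ℂ) (hU : U ∈ Matrix.unitaryGroup n ℂ) (D : Matrix n n ℂ)
    (p : Polynomial ℂ) :
    aeval (U * D * star U) p = U * aeval D p * star U := by
  rw [aeval_eq_sum_range, aeval_eq_sum_range, Finset.mul_sum, Finset.sum_mul]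
  refine Finset.sum_congr rfl fun k _ => ?_
  rw [conj_pow_unitary U hU, mul_smul_comm, smul_mul_assoc]

lemma aeval_diagonal {n : Type*} [Fintype n] [DecidableEq n]
    (v : n → ℂ) (p : Polynomial ℂ) :
    aeval (Matrix.diagonal v) p = Matrix.diagonal (fun i => aeval (v i) p) := by
  have h := aeval_algHom_apply (Matrix.diagonalAlgHom (n := n) (α := ℂ) ℂ) v p
  have h2 : ∀ w, Matrix.diagonalAlgHom (n := n) (α := ℂ) ℂ w = Matrix.diagonal w := fun _ => rfl
  simpa [h2, funext (aeval_fn_apply p v)] using h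

lemma star_coe_real (d : ℝ) : star ((d : ℂ)) = (d : ℂ) := Complex.conj_ofReal d

lemma isHermitian_diag_real {n : Type*} [Fintype n] [DecidableEq n] (d : n → ℝ) :
    (Matrix.diagonal (fun i => (d i : ℂ))).IsHermitian := by
  unfold Matrix.IsHermitian
  rw [Matrix.diagonal_conjTranspose]
  have : (star fun i => ((d i : ℂ))) = fun i => ((d i : ℂ)) :=
    funext fun i => Complex.conj_ofReal _
  rw [this]

lemma isHermitian_conj_diag {n : Type*} [Fintype n] [DecidableEq n]
    (U : Matrix n n ℂ) (d : n → ℝ) :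
    (U * Matrix.diagonal (fun i => (d i : ℂ)) * star U).IsHermitian := by
  rw [Matrix.star_eq_conjTranspose]
  exact Matrix.isHermitian_mul_mul_conjTranspose U (isHermitian_diag_real d)

lemma aeval_conj_diag_real {n : Type*} [Fintype n] [DecidableEq n]
    (U : Matrix n n ℂ) (hU : U ∈ Matrix.unitaryGroup n ℂ) (d : n → ℝ) (p : Polynomial ℝ) :
    aeval (U * Matrix.diagonal (fun i => (d i : ℂ)) * star U) (p.map (algebraMap ℝ ℂ))
      = U * Matrix.diagonal (fun i => ((p.eval (d i) : ℝ) : ℂ)) * star U := by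
  rw [aeval_conj_unitary U hU, aeval_diagonal]
  have : (fun i => aeval ((d i : ℂ)) (p.map (algebraMap ℝ ℂ)))
      = fun i => ((p.eval (d i) : ℝ) : ℂ) := by
    funext i
    have h1 : ((d i : ℂ)) = algebraMap ℝ ℂ (d i) := rfl
    rw [h1, aeval_map_algebraMap, aeval_algebraMap_apply_eq_algebraMap_eval]
    rfl
  rw [this]

/-- well-definedness of `mfun` under any unitary diagonalization -/
lemma mfun_conj_diag {n : Type*} [Fintype n] [DecidableEq n]
    (f : ℝ → ℝ) (U : Matrix n n ℂ) (hU : U ∈ Matrix.unitaryGroup n ℂ) (d : n → ℝ) :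
    mfun f (U * Matrix.diagonal (fun i => (d i : ℂ)) * star U)
      = U * Matrix.diagonal (fun i => (f (d i) : ℂ)) * star U := by
  set A := U * Matrix.diagonal (fun i => (d i : ℂ)) * star U with hAdef
  have hA : A.IsHermitian := isHermitian_conj_diag U d
  have hV : (hA.eigenvectorUnitary : Matrix n n ℂ) ∈ Matrix.unitaryGroup n ℂ :=
    hA.eigenvectorUnitary.2
  set S : Finset ℝ := (Finset.univ.image hA.eigenvalues) ∪ (Finset.univ.image d) with hS
  set p : Polynomial ℝ := Lagrange.interpolate S id f with hp
  have hpeval : ∀ x ∈ S, p.eval x = f x := by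
    intro x hx
    simpa [hp] using Lagrange.eval_interpolate_at_node (r := f) (Set.injOn_id _) hx
  have key1 : aeval A (p.map (algebraMap ℝ ℂ))
      = U * Matrix.diagonal (fun i => (f (d i) : ℂ)) * star U := by
    rw [hAdef, aeval_conj_diag_real U hU]
    have : (fun i => ((p.eval (d i) : ℝ) : ℂ)) = fun i => ((f (d i) : ℝ) : ℂ) := by
      funext i; rw [hpeval (d i) (by simp [hS])]
    rw [this]
  have hspec : A = (hA.eigenvectorUnitary : Matrix n n ℂ)
      * Matrix.diagonal (fun i => ((hA.eigenvalues i : ℝ) : ℂ))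
      * star (hA.eigenvectorUnitary : Matrix n n ℂ) := by
    exact hA.spectral_theorem
  have key2 : aeval A (p.map (algebraMap ℝ ℂ))
      = (hA.eigenvectorUnitary : Matrix n n ℂ)
        * Matrix.diagonal (fun i => (f (hA.eigenvalues i) : ℂ))
        * star (hA.eigenvectorUnitary : Matrix n n ℂ) := by
    conv_lhs => rw [hspec]
    rw [aeval_conj_diag_real _ hV]
    have : (fun i => ((p.eval (hA.eigenvalues i) : ℝ) : ℂ))
        = fun i => ((f (hA.eigenvalues i) : ℝ) : ℂ) := by
      funext i; rw [hpeval (hA.eigenvalues i) (by simp [hS])]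
    rw [this]
  rw [mfun, dif_pos hA, ← key2, key1]

lemma mfun_isHermitian {n : Type*} [Fintype n] [DecidableEq n]
    (f : ℝ → ℝ) (A : Matrix n n ℂ) : (mfun f A).IsHermitian := by
  unfold mfun
  split
  · exact isHermitian_conj_diag _ _
  · exact Matrix.isHermitian_zero

lemma conjTranspose_kron {A B : Type*} [Fintype A] [Fintype B]
    (X : Matrix A A ℂ) (Y : Matrix B B ℂ) : (X ⊗ₖ Y)ᴴ = Xᴴ ⊗ₖ Yᴴ := by
  ext ⟨a, b⟩ ⟨c, e⟩
  simp [Matrix.conjTranspose_apply, Matrix.kroneckerMap_apply, mul_comm]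

lemma kron_one_unitary {A B : Type*} [Fintype A] [DecidableEq A] [Fintype B] [DecidableEq B]
    (U : Matrix A A ℂ) (hU : U ∈ Matrix.unitaryGroup A ℂ) :
    (U ⊗ₖ (1 : Matrix B B ℂ)) ∈ Matrix.unitaryGroup (A × B) ℂ := by
  rw [Matrix.mem_unitaryGroup_iff]
  rw [Matrix.star_eq_conjTranspose, conjTranspose_kron, Matrix.conjTranspose_one,
    ← Matrix.mul_kronecker_mul, mul_one, ← Matrix.star_eq_conjTranspose,
    Matrix.mem_unitaryGroup_iff.mp hU, Matrix.one_kronecker_one]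

lemma mfun_kron_one {A B : Type*} [Fintype A] [DecidableEq A] [Fintype B] [DecidableEq B]
    (f : ℝ → ℝ) (X : Matrix A A ℂ) (hX : X.IsHermitian) :
    mfun f (X ⊗ₖ (1 : Matrix B B ℂ)) = (mfun f X) ⊗ₖ (1 : Matrix B B ℂ) := by
  have hV : (hX.eigenvectorUnitary : Matrix A A ℂ) ∈ Matrix.unitaryGroup A ℂ :=
    hX.eigenvectorUnitary.2
  set V := (hX.eigenvectorUnitary : Matrix A A ℂ)
  set e := hX.eigenvalues
  have hdiag : ∀ g : ℝ → ℝ,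
      (Matrix.diagonal (fun i => (g (e i) : ℂ))) ⊗ₖ (1 : Matrix B B ℂ)
        = Matrix.diagonal (fun i : A × B => (g (e i.1) : ℂ)) := by
    intro g
    rw [← Matrix.diagonal_one, Matrix.diagonal_kronecker_diagonal]
    congr 1
    funext i
    simp
  have hkron : ∀ D : Matrix A A ℂ, (V * D * star V) ⊗ₖ (1 : Matrix B B ℂ)
      = (V ⊗ₖ (1 : Matrix B B ℂ)) * (D ⊗ₖ (1 : Matrix B B ℂ))
        * star (V ⊗ₖ (1 : Matrix B B ℂ)) := by
    intro D
    have h1 : star (V ⊗ₖ (1 : Matrix B B ℂ)) = (star V) ⊗ₖ (1 : Matrix B B ℂ) := by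
      rw [Matrix.star_eq_conjTranspose, conjTranspose_kron, Matrix.conjTranspose_one,
        Matrix.star_eq_conjTranspose]
    rw [h1, ← Matrix.mul_kronecker_mul, ← Matrix.mul_kronecker_mul, mul_one, mul_one]
  have hXspec : X = V * Matrix.diagonal (fun i => ((e i : ℝ) : ℂ)) * star V := by
    exact hX.spectral_theorem
  conv_lhs => rw [hXspec, hkron]
  have hd1 : (Matrix.diagonal fun i => ((e i : ℝ) : ℂ)) ⊗ₖ (1 : Matrix B B ℂ)
      = Matrix.diagonal (fun i : A × B => ((e i.1 : ℝ) : ℂ)) := hdiag id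
  rw [hd1, mfun_conj_diag f _ (kron_one_unitary V hV) (fun i : A × B => e i.1)]
  have hmf : mfun f X = V * Matrix.diagonal (fun i => (f (e i) : ℂ)) * star V := by
    conv_lhs => rw [hXspec]
    exact mfun_conj_diag f V hV e
  rw [hmf, hkron, hdiag f]

lemma trace_mul_kron_one {A B : Type*} [Fintype A] [DecidableEq A] [Fintype B] [DecidableEq B]
    (R : Matrix (A × B) (A × B) ℂ) (X : Matrix A A ℂ) :
    (R * (X ⊗ₖ (1 : Matrix B B ℂ))).trace
      = ((Matrix.of fun x y => ∑ b : B, R (x, b) (y, b)) * X).trace := by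
  simp only [Matrix.trace, Matrix.diag, Matrix.mul_apply, Matrix.kroneckerMap_apply,
    Matrix.one_apply, Matrix.of_apply, Fintype.sum_prod_type]
  simp only [mul_ite, mul_one, mul_zero, Finset.sum_ite_eq', Finset.sum_ite_eq,
    Finset.mem_univ, if_true, Finset.sum_mul]
  exact Finset.sum_congr rfl fun a _ => Finset.sum_comm

lemma psd_trace_re_nonneg {n : Type*} [Fintype n] [DecidableEq n]
    (N : Matrix n n ℂ) (h : N.PosSemidef) : 0 ≤ (N.trace).re := by
  have hdiag : ∀ i, 0 ≤ (N i i).re := by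
    intro i
    have h2 := h.re_dotProduct_nonneg (Pi.single i 1)
    simpa [dotProduct, Matrix.mulVec, Pi.single_apply, Finset.sum_ite_eq,
      Finset.sum_ite_eq', mul_ite, ite_mul] using h2
  rw [Matrix.trace]
  rw [Complex.re_sum]
  exact Finset.sum_nonneg fun i _ => hdiag i

lemma margA13_isHermitian {A B : Type*} [Fintype A] [Fintype B]
    {ρ : Matrix (A × B) (A × B) ℂ} (h : ρ.IsHermitian) : (margA13 ρ).IsHermitian := by
  ext x y
  simp only [Matrix.conjTranspose_apply, margA13]
  rw [star_sum]
  exact Finset.sum_congr rfl fun b _ => h.apply (x, b) (y, b)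

lemma trace_mul_kron_one' {A B : Type*} [Fintype A] [DecidableEq A] [Fintype B] [DecidableEq B]
    (R : Matrix (A × B) (A × B) ℂ) (X : Matrix A A ℂ) :
    (R * (X ⊗ₖ (1 : Matrix B B ℂ))).trace = ((margA13 R) * X).trace :=
  trace_mul_kron_one R X


end Aux

/-- with M = log σ_AB − log(σ_A⊗I) + log(ρ_A⊗I),
Z = Tr exp(M) and τ_AB = exp(M)/Z, if supp(ρ_AB) ⊆ supp(σ_AB) and Z ≤ 1, then
D(ρ_AB‖τ_AB) ≤ D(ρ_AB‖σ_AB) − D(ρ_A‖σ_A). -/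
theorem stmt13 {A B : Type*} [Fintype A] [DecidableEq A] [Fintype B] [DecidableEq B]
    (ρAB σAB : Matrix (A × B) (A × B) ℂ)
    (hρ : ρAB.PosSemidef) (hρ1 : ρAB.trace = 1)
    (hσ : σAB.PosSemidef) (hσ1 : σAB.trace = 1)
    (hsupp : ∀ v : A × B → ℂ, σAB.mulVec v = 0 → ρAB.mulVec v = 0)
    (M : Matrix (A × B) (A × B) ℂ)
    (hM : M = mlog σAB - mlog ((margA13 σAB) ⊗ₖ (1 : Matrix B B ℂ))
        + mlog ((margA13 ρAB) ⊗ₖ (1 : Matrix B B ℂ)))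
    (Z : ℝ) (hZdef : Z = ((mexp0 M).trace).re) (hZ : Z ≤ 1)
    (τAB : Matrix (A × B) (A × B) ℂ) (hτ : τAB = Z⁻¹ • mexp0 M) :
    relEnt ρAB τAB ≤ relEnt ρAB σAB - relEnt (margA13 ρAB) (margA13 σAB) := by
  classical
  have hρAh : (margA13 ρAB).IsHermitian := margA13_isHermitian hρ.isHermitian
  have hσAh : (margA13 σAB).IsHermitian := margA13_isHermitian hσ.isHermitian
  have hMh : M.IsHermitian := by
    rw [hM]
    exact ((mfun_isHermitian _ _).sub (mfun_isHermitian _ _)).add (mfun_isHermitian _ _)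
  set V : Matrix (A × B) (A × B) ℂ := (hMh.eigenvectorUnitary : Matrix (A × B) (A × B) ℂ)
    with hVdef
  have hV : V ∈ Matrix.unitaryGroup (A × B) ℂ := hMh.eigenvectorUnitary.2
  set lam := hMh.eigenvalues with hlamdef
  set g : ℝ → ℝ := fun x => if x = 0 then 0 else Real.exp x with hg
  have hexp : mexp0 M = V * Matrix.diagonal (fun i => (g (lam i) : ℂ)) * star V := by
    unfold mexp0 mfun
    rw [dif_pos hMh]
  have hgnn : ∀ x, 0 ≤ g x := by
    intro x
    by_cases h : x = 0 <;> simp [hg, h, (Real.exp_pos x).le]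
  have hZsum : Z = ∑ i, g (lam i) := by
    rw [hZdef, hexp, Matrix.trace_mul_cycle, Matrix.mem_unitaryGroup_iff'.mp hV, one_mul,
      Matrix.trace_diagonal, Complex.re_sum]
    simp
  have hZnn : 0 ≤ Z := hZsum ▸ Finset.sum_nonneg fun i _ => hgnn _
  have hlogZ : Real.log Z ≤ 0 := Real.log_nonpos hZnn hZ
  set χ : ℝ → ℝ := fun x => if x = 0 then 0 else 1 with hχ
  set P : Matrix (A × B) (A × B) ℂ :=
    V * Matrix.diagonal (fun i => (χ (lam i) : ℂ)) * star V with hPdef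
  have hptwise : ∀ i, Real.log (Z⁻¹ * g (lam i)) = lam i - Real.log Z * χ (lam i) := by
    intro i
    by_cases h : lam i = 0
    · simp [hg, hχ, h]
    · have hgpos : 0 < g (lam i) := by simp [hg, h, Real.exp_pos]
      have hZpos : 0 < Z := by
        have h1 : g (lam i) ≤ ∑ j, g (lam j) :=
          Finset.single_le_sum (fun j _ => hgnn _) (Finset.mem_univ i)
        rw [hZsum]; linarith
      have hgi : g (lam i) = Real.exp (lam i) := by simp [hg, h]
      rw [hgi, Real.log_mul (by positivity) (Real.exp_ne_zero _), Real.log_inv, Real.log_exp]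
      have hχi : χ (lam i) = 1 := by simp [hχ, h]
      rw [hχi]; ring
  have hτdec : τAB = V * Matrix.diagonal (fun i => ((Z⁻¹ * g (lam i) : ℝ) : ℂ)) * star V := by
    rw [hτ, hexp]
    have h1 : Z⁻¹ • (V * Matrix.diagonal (fun i => (g (lam i) : ℂ)) * star V)
        = V * (Z⁻¹ • Matrix.diagonal (fun i => (g (lam i) : ℂ))) * star V := by
      rw [mul_smul_comm, smul_mul_assoc]
    rw [h1]
    congr 1
    congr 1
    ext i j
    rw [Matrix.smul_apply]
    by_cases h : i = j
    · subst h
      rw [Matrix.diagonal_apply_eq, Matrix.diagonal_apply_eq, Complex.real_smul]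
      push_cast
      ring
    · rw [Matrix.diagonal_apply_ne _ h, Matrix.diagonal_apply_ne _ h, smul_zero]
  have hMspec : M = V * Matrix.diagonal (fun i => ((lam i : ℝ) : ℂ)) * star V := by
    exact hMh.spectral_theorem
  have hlogτ : mlog τAB = M - (Real.log Z : ℂ) • P := by
    rw [mlog, hτdec, mfun_conj_diag Real.log V hV]
    have h1 : (fun i => ((Real.log (Z⁻¹ * g (lam i)) : ℝ) : ℂ))
        = fun i => ((lam i : ℂ) - (Real.log Z : ℂ) * (χ (lam i) : ℂ)) := by
      funext i
      rw [hptwise i]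
      push_cast
      ring
    rw [h1]
    have h2 : Matrix.diagonal (fun i => ((lam i : ℂ) - (Real.log Z : ℂ) * (χ (lam i) : ℂ)))
        = Matrix.diagonal (fun i => ((lam i : ℝ) : ℂ))
          - (Real.log Z : ℂ) • Matrix.diagonal (fun i => (χ (lam i) : ℂ)) := by
      ext i j
      by_cases h : i = j
      · subst h; simp [Matrix.diagonal_apply_eq]
      · simp [Matrix.diagonal_apply_ne _ h]
    rw [h2, Matrix.mul_sub, Matrix.sub_mul]
    rw [← hMspec]
    congr 1
    rw [mul_smul_comm, smul_mul_assoc]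
  have hPtr : 0 ≤ ((ρAB * P).trace).re := by
    set C := V * Matrix.diagonal (fun i => (χ (lam i) : ℂ)) with hC
    have hCH : Cᴴ = Matrix.diagonal (fun i => (χ (lam i) : ℂ)) * star V := by
      rw [hC, Matrix.conjTranspose_mul, Matrix.diagonal_conjTranspose,
        Matrix.star_eq_conjTranspose]
      have hst : (star fun i => ((χ (lam i) : ℝ) : ℂ)) = fun i => ((χ (lam i) : ℝ) : ℂ) :=
        funext fun i => Complex.conj_ofReal _
      rw [hst]
    have hCP : P = C * Cᴴ := by
      rw [hPdef, hC, hCH]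
      have h3 : Matrix.diagonal (fun i => (χ (lam i) : ℂ))
          * Matrix.diagonal (fun i => (χ (lam i) : ℂ))
          = Matrix.diagonal (fun i => (χ (lam i) : ℂ)) := by
        rw [Matrix.diagonal_mul_diagonal]
        have hsq : (fun i => ((χ (lam i) : ℝ) : ℂ) * ((χ (lam i) : ℝ) : ℂ))
            = fun i => ((χ (lam i) : ℝ) : ℂ) := by
          funext i
          by_cases h : lam i = 0 <;> simp [hχ, h]
        rw [hsq]
      calc V * Matrix.diagonal (fun i => (χ (lam i) : ℂ)) * star V
          = V * (Matrix.diagonal (fun i => (χ (lam i) : ℂ))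
            * Matrix.diagonal (fun i => (χ (lam i) : ℂ))) * star V := by rw [h3]
        _ = V * Matrix.diagonal (fun i => (χ (lam i) : ℂ))
            * (Matrix.diagonal (fun i => (χ (lam i) : ℂ)) * star V) := by
              simp only [Matrix.mul_assoc]
    have htr : (ρAB * P).trace = (Cᴴ * ρAB * C).trace := by
      rw [hCP, ← Matrix.mul_assoc, Matrix.trace_mul_cycle]
    rw [htr]
    exact psd_trace_re_nonneg _ (hρ.conjTranspose_mul_mul_same C)
  have hTrM : ((ρAB * M).trace).re
      = ((ρAB * mlog σAB).trace).re
        - (((margA13 ρAB) * mlog (margA13 σAB)).trace).re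
        + (((margA13 ρAB) * mlog (margA13 ρAB)).trace).re := by
    rw [hM]
    have hkσ : mlog ((margA13 σAB) ⊗ₖ (1 : Matrix B B ℂ))
        = (mlog (margA13 σAB)) ⊗ₖ (1 : Matrix B B ℂ) := mfun_kron_one _ _ hσAh
    have hkρ : mlog ((margA13 ρAB) ⊗ₖ (1 : Matrix B B ℂ))
        = (mlog (margA13 ρAB)) ⊗ₖ (1 : Matrix B B ℂ) := mfun_kron_one _ _ hρAh
    rw [hkσ, hkρ, Matrix.mul_add, Matrix.mul_sub, Matrix.trace_add, Matrix.trace_sub,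
      trace_mul_kron_one', trace_mul_kron_one']
    simp [Complex.add_re, Complex.sub_re]
  have hexpand : relEnt ρAB τAB
      = ((ρAB * mlog ρAB).trace).re - ((ρAB * M).trace).re
        + Real.log Z * ((ρAB * P).trace).re := by
    unfold relEnt
    rw [hlogτ, Matrix.mul_sub, Matrix.trace_sub, mul_smul_comm, Matrix.trace_smul]
    rw [Complex.sub_re, Complex.sub_re]
    have : ((Real.log Z : ℂ) • (ρAB * P).trace).re = Real.log Z * ((ρAB * P).trace).re := by
      rw [smul_eq_mul, Complex.re_ofReal_mul]
    rw [this]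
    ring
  have hexpandR : relEnt ρAB σAB - relEnt (margA13 ρAB) (margA13 σAB)
      = ((ρAB * mlog ρAB).trace).re - ((ρAB * M).trace).re := by
    unfold relEnt
    rw [hTrM]
    simp only [Complex.sub_re]
    ring
  rw [hexpand, hexpandR]
  have hmul : Real.log Z * ((ρAB * P).trace).re ≤ 0 :=
    mul_nonpos_iff.mpr (Or.inr ⟨hlogZ, hPtr⟩)
  linarith
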